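/- Let (Q0, Q1, Q2, Q3, A1, A2) be a solution of system (S) on [0, ∞) with initial data Q0(0) > 0, Q1(0) = Q2(0) = Q3(0) = 0, A1(0) ∈ (-τ_{A1}, τ_{A1}), A2(0) ∈ (0, τ_{A2}), and assume τ_{A1} < τ_{A1}^C. Then there exist a time t* > 0 and constants 0 < c_y < C_y such that for all t > t*, c_y ≤ Q2(t) + Q3(t) ≤ C_y. -/

import Mathlib

open Set

lemma my_antideriv {a : ℝ → ℝ} (ha : ∀ t ∈ Set.Ici (0:ℝ), ContinuousAt a t) :
    ∃ F : ℝ → ℝ, F 0 = 0 ∧ ∀ t : ℝ, HasDerivAt F (a (max t 0)) t := by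
  have hc : Continuous (fun s : ℝ => a (max s 0)) := by
    rw [continuous_iff_continuousAt]
    intro s
    have hm : ContinuousAt (fun t : ℝ => max t 0) s :=
      (continuous_id.max continuous_const).continuousAt
    exact ContinuousAt.comp (g := a) (f := fun t : ℝ => max t 0) (ha (max s 0) (Set.mem_Ici.2 (le_max_right _ _))) hm
  refine ⟨fun t => ∫ s in (0:ℝ)..t, a (max s 0), by simp, fun t => ?_⟩
  have := intervalIntegral.integral_hasDerivAt_right (hc.intervalIntegrable 0 t)
    (hc.aestronglyMeasurable.stronglyMeasurableAtFilter) hc.continuousAt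
  exact this

lemma my_comp_core {a d x : ℝ → ℝ}
    (ha : ∀ t ∈ Set.Ici (0:ℝ), ContinuousAt a t)
    (hx : ∀ t ∈ Set.Ici (0:ℝ), HasDerivAt x (d t) t)
    (hd : ∀ t ∈ Set.Ici (0:ℝ), a t * x t ≤ d t) :
    ∃ E : ℝ → ℝ, (∀ t, 0 < E t) ∧
      (∀ t ∈ Set.Ici (0:ℝ), x 0 ≤ x t * E t) ∧
      ((∀ t ∈ Set.Ioi (0:ℝ), a t * x t < d t) →
        ∀ t ∈ Set.Ioi (0:ℝ), x 0 < x t * E t) := by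
  obtain ⟨F, hF0, hF⟩ := my_antideriv ha
  have hg' : ∀ t ∈ Set.Ici (0:ℝ),
      HasDerivAt (fun s => x s * Real.exp (-F s)) ((d t - a t * x t) * Real.exp (-F t)) t := by
    intro t ht
    have h1 : HasDerivAt (fun s => Real.exp (-F s)) (Real.exp (-F t) * -(a (max t 0))) t :=
      ((hF t).neg).exp
    have h2 := (hx t ht).mul h1
    rw [max_eq_left ht] at h2
    exact h2.congr_deriv (by ring)
  have hcont : ContinuousOn (fun s => x s * Real.exp (-F s)) (Set.Ici 0) :=
    fun t ht => (hg' t ht).continuousAt.continuousWithinAt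
  have hg0 : x 0 * Real.exp (-F 0) = x 0 := by rw [hF0]; simp
  refine ⟨fun t => Real.exp (-F t), fun t => Real.exp_pos _, ?_, ?_⟩
  · have hmono : MonotoneOn (fun s => x s * Real.exp (-F s)) (Set.Ici 0) := by
      apply monotoneOn_of_deriv_nonneg (convex_Ici 0) hcont
      · intro t ht
        rw [interior_Ici] at ht
        exact (hg' t (Set.mem_Ici.2 (Set.mem_Ioi.1 ht).le)).differentiableAt.differentiableWithinAt
      · intro t ht
        rw [interior_Ici] at ht
        rw [(hg' t (Set.mem_Ici.2 (Set.mem_Ioi.1 ht).le)).deriv]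
        exact mul_nonneg (sub_nonneg.2 (hd t (Set.mem_Ici.2 (Set.mem_Ioi.1 ht).le))) (Real.exp_pos _).le
    intro t ht
    have := hmono Set.self_mem_Ici ht ht
    simp only [] at this ⊢
    rw [hg0] at this
    exact this
  · intro hd' t ht
    have hmono : StrictMonoOn (fun s => x s * Real.exp (-F s)) (Set.Ici 0) := by
      apply strictMonoOn_of_deriv_pos (convex_Ici 0) hcont
      intro t ht
      rw [interior_Ici] at ht
      rw [(hg' t (Set.mem_Ici.2 (Set.mem_Ioi.1 ht).le)).deriv]
      exact mul_pos (sub_pos.2 (hd' t ht)) (Real.exp_pos _)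
    have := hmono Set.self_mem_Ici (Set.mem_Ici.2 (Set.mem_Ioi.1 ht).le) ht
    simp only [] at this ⊢
    rw [hg0] at this
    exact this

lemma my_no_upcross {y d : ℝ → ℝ} {C t0 t3 : ℝ} (h03 : t0 ≤ t3)
    (hy : ∀ t ∈ Set.Icc t0 t3, HasDerivAt y (d t) t)
    (h0 : y t0 ≤ C)
    (hder : ∀ t ∈ Set.Ioo t0 t3, C < y t → d t ≤ 0) :
    y t3 ≤ C := by
  by_contra hcon
  push_neg at hcon
  set S := {s ∈ Set.Icc t0 t3 | y s ≤ C} with hS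
  have ht0S : t0 ∈ S := ⟨⟨le_refl _, h03⟩, h0⟩
  have hne : S.Nonempty := ⟨t0, ht0S⟩
  have hbdd : BddAbove S := ⟨t3, fun s hs => hs.1.2⟩
  set t2 := sSup S with ht2
  have ht2mem : t2 ∈ Set.Icc t0 t3 :=
    ⟨le_csSup hbdd ht0S, csSup_le hne (fun s hs => hs.1.2)⟩
  have ht2le : y t2 ≤ C := by
    by_contra h
    push_neg at h
    have hca : ContinuousAt y t2 := (hy t2 ht2mem).continuousAt
    have hev : ∀ᶠ s in nhds t2, C < y s := hca.eventually (eventually_gt_nhds h)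
    rw [Metric.eventually_nhds_iff] at hev
    obtain ⟨δ, hδ, hball⟩ := hev
    obtain ⟨s, hsS, hs⟩ := exists_lt_of_lt_csSup hne (by linarith : t2 - δ < t2)
    have hsle : s ≤ t2 := le_csSup hbdd hsS
    have : C < y s := hball (by rw [Real.dist_eq]; rw [abs_lt]; constructor <;> linarith)
    exact absurd hsS.2 (not_le.2 this)
  have ht2lt : t2 < t3 := lt_of_le_of_ne ht2mem.2 (fun h => by rw [h] at ht2le; linarith)
  have hgt : ∀ s, t2 < s → s ≤ t3 → C < y s := by
    intro s h1 h2
    by_contra h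
    push_neg at h
    exact absurd (le_csSup hbdd ⟨⟨le_trans ht2mem.1 h1.le, h2⟩, h⟩) (not_le.2 h1)
  have hanti : AntitoneOn y (Set.Icc t2 t3) := by
    apply antitoneOn_of_deriv_nonpos (convex_Icc _ _)
    · exact fun s hs => (hy s ⟨le_trans ht2mem.1 hs.1, hs.2⟩).continuousAt.continuousWithinAt
    · intro s hs
      rw [interior_Icc] at hs
      exact (hy s ⟨le_trans ht2mem.1 hs.1.le, hs.2.le⟩).differentiableAt.differentiableWithinAt
    · intro s hs
      rw [interior_Icc] at hs
      rw [(hy s ⟨le_trans ht2mem.1 hs.1.le, hs.2.le⟩).deriv]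
      exact hder s ⟨lt_of_le_of_lt ht2mem.1 hs.1, hs.2⟩ (hgt s hs.1 hs.2.le)
  have := hanti ⟨le_refl t2, ht2lt.le⟩ ⟨ht2lt.le, le_refl t3⟩ ht2lt.le
  linarith [ht2le]

lemma my_no_downcross {y d : ℝ → ℝ} {C t0 t3 : ℝ} (h03 : t0 ≤ t3)
    (hy : ∀ t ∈ Set.Icc t0 t3, HasDerivAt y (d t) t)
    (h0 : C ≤ y t0)
    (hder : ∀ t ∈ Set.Ioo t0 t3, y t < C → 0 ≤ d t) :
    C ≤ y t3 := by
  have := my_no_upcross (y := fun t => -y t) (d := fun t => -d t) (C := -C) h03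
    (fun t ht => (hy t ht).neg) (by simpa using h0)
    (fun t ht h => by have := hder t ht (by simpa using h); simpa using this)
  simpa using this

lemma my_nonneg {a d x : ℝ → ℝ}
    (ha : ∀ t ∈ Set.Ici (0:ℝ), ContinuousAt a t)
    (hx : ∀ t ∈ Set.Ici (0:ℝ), HasDerivAt x (d t) t)
    (hd : ∀ t ∈ Set.Ici (0:ℝ), a t * x t ≤ d t)
    (h0 : 0 ≤ x 0) : ∀ t ∈ Set.Ici (0:ℝ), 0 ≤ x t := by
  obtain ⟨E, hE, hmain, _⟩ := my_comp_core ha hx hd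
  intro t ht
  nlinarith [hE t, hmain t ht]

lemma my_pos {a d x : ℝ → ℝ}
    (ha : ∀ t ∈ Set.Ici (0:ℝ), ContinuousAt a t)
    (hx : ∀ t ∈ Set.Ici (0:ℝ), HasDerivAt x (d t) t)
    (hd : ∀ t ∈ Set.Ici (0:ℝ), a t * x t ≤ d t)
    (h0 : 0 < x 0) : ∀ t ∈ Set.Ici (0:ℝ), 0 < x t := by
  obtain ⟨E, hE, hmain, _⟩ := my_comp_core ha hx hd
  intro t ht
  nlinarith [hE t, hmain t ht]

lemma my_pos' {a d x : ℝ → ℝ}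
    (ha : ∀ t ∈ Set.Ici (0:ℝ), ContinuousAt a t)
    (hx : ∀ t ∈ Set.Ici (0:ℝ), HasDerivAt x (d t) t)
    (hd : ∀ t ∈ Set.Ici (0:ℝ), a t * x t ≤ d t)
    (hd' : ∀ t ∈ Set.Ioi (0:ℝ), a t * x t < d t)
    (h0 : 0 ≤ x 0) : ∀ t ∈ Set.Ioi (0:ℝ), 0 < x t := by
  obtain ⟨E, hE, _, hstrict⟩ := my_comp_core ha hx hd
  intro t ht
  nlinarith [hE t, hstrict hd' t ht]

set_option maxHeartbeats 1000000 in
theorem stmt7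
    (γ2 γ3 τC τA1 τA1C τA2 τA2C α1 α2 α3 αb2 αb3 : ℝ)
    (hγ2 : 0 < γ2) (hγ3 : 0 < γ3) (hτC : 0 < τC) (hτA1 : 0 < τA1)
    (hτA1C : 0 < τA1C) (hτA2 : 0 < τA2) (hτA2C : 0 < τA2C)
    (hα1 : 0 < α1) (hα2 : 0 < α2) (hα3 : 0 < α3) (hαb2 : 0 < αb2) (hαb3 : 0 < αb3)
    (f0 : ℝ → ℝ → ℝ) (f1 : ℝ → ℝ) (f2 : ℝ → ℝ → ℝ)
    (K0 K1 K2 : NNReal)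
    (hf0lip : LipschitzWith K0 (fun p : ℝ × ℝ => f0 p.1 p.2))
    (hf1lip : LipschitzWith K1 f1)
    (hf2lip : LipschitzWith K2 (fun p : ℝ × ℝ => f2 p.1 p.2))
    (m0 M0 m1 M1 m2 M2 : ℝ) (hm0 : 0 < m0) (hm1 : 0 < m1) (hm2 : 0 < m2)
    (hf0bd : ∀ x y, m0 ≤ f0 x y ∧ f0 x y ≤ M0)
    (hf1bd : ∀ x, m1 ≤ f1 x ∧ f1 x ≤ M1)
    (hf2bd : ∀ x y, m2 ≤ f2 x y ∧ f2 x y ≤ M2)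
    (Q0 Q1 Q2 Q3 A1 A2 : ℝ → ℝ)
    (hQ0' : ∀ t ∈ Set.Ici (0:ℝ), HasDerivAt Q0 (-(f0 (Q2 t) (Q3 t)) * Q0 t) t)
    (hQ1' : ∀ t ∈ Set.Ici (0:ℝ), HasDerivAt Q1 (f0 (Q2 t) (Q3 t) * Q0 t - f1 (A1 t) * Q1 t) t)
    (hQ2' : ∀ t ∈ Set.Ici (0:ℝ), HasDerivAt Q2
      (γ2 * Q2 t * (1 - (Q2 t + Q3 t) / τC + A1 t / τA1C + A2 t / τA2C)
        + f1 (A1 t) * Q1 t - f2 (A1 t) (A2 t) * Q2 t) t)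
    (hQ3' : ∀ t ∈ Set.Ici (0:ℝ), HasDerivAt Q3
      (γ3 * Q3 t * (1 - (Q2 t + Q3 t) / τC + A1 t / τA1C + A2 t / τA2C)
        + f2 (A1 t) (A2 t) * Q2 t) t)
    (hA1' : ∀ t ∈ Set.Ici (0:ℝ), HasDerivAt A1
      ((α1 * Q1 t + α2 * Q2 t - α3 * Q3 t) * (1 + A1 t / τA1) * (1 - A1 t / τA1)) t)
    (hA2' : ∀ t ∈ Set.Ici (0:ℝ), HasDerivAt A2
      ((αb2 * Q2 t + αb3 * Q3 t) * A2 t * (1 - A2 t / τA2)) t)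
    (hQ0i : 0 < Q0 0) (hQ1i : Q1 0 = 0) (hQ2i : Q2 0 = 0) (hQ3i : Q3 0 = 0)
    (hA1i : A1 0 ∈ Set.Ioo (-τA1) τA1) (hA2i : A2 0 ∈ Set.Ioo 0 τA2)
    (hττ : τA1 < τA1C) :
    ∃ tstar > (0:ℝ), ∃ cy Cy : ℝ, 0 < cy ∧ cy < Cy ∧
      ∀ t > tstar, cy ≤ Q2 t + Q3 t ∧ Q2 t + Q3 t ≤ Cy := by
  -- continuity of components on Ici 0
  have hQ0c : ∀ t ∈ Set.Ici (0:ℝ), ContinuousAt Q0 t := fun t ht => (hQ0' t ht).continuousAt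
  have hQ1c : ∀ t ∈ Set.Ici (0:ℝ), ContinuousAt Q1 t := fun t ht => (hQ1' t ht).continuousAt
  have hQ2c : ∀ t ∈ Set.Ici (0:ℝ), ContinuousAt Q2 t := fun t ht => (hQ2' t ht).continuousAt
  have hQ3c : ∀ t ∈ Set.Ici (0:ℝ), ContinuousAt Q3 t := fun t ht => (hQ3' t ht).continuousAt
  have hA1c : ∀ t ∈ Set.Ici (0:ℝ), ContinuousAt A1 t := fun t ht => (hA1' t ht).continuousAt
  have hA2c : ∀ t ∈ Set.Ici (0:ℝ), ContinuousAt A2 t := fun t ht => (hA2' t ht).continuousAt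
  have hf0c : ∀ t ∈ Set.Ici (0:ℝ), ContinuousAt (fun s => f0 (Q2 s) (Q3 s)) t := by
    intro t ht
    exact ContinuousAt.comp (g := fun p : ℝ × ℝ => f0 p.1 p.2) (f := fun s => (Q2 s, Q3 s))
      hf0lip.continuous.continuousAt ((hQ2c t ht).prodMk (hQ3c t ht))
  have hf1c : ∀ t ∈ Set.Ici (0:ℝ), ContinuousAt (fun s => f1 (A1 s)) t := fun t ht =>
    ContinuousAt.comp (g := f1) hf1lip.continuous.continuousAt (hA1c t ht)
  have hf2c : ∀ t ∈ Set.Ici (0:ℝ), ContinuousAt (fun s => f2 (A1 s) (A2 s)) t := by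
    intro t ht
    exact ContinuousAt.comp (g := fun p : ℝ × ℝ => f2 p.1 p.2) (f := fun s => (A1 s, A2 s))
      hf2lip.continuous.continuousAt ((hA1c t ht).prodMk (hA2c t ht))
  -- Q0 positive and decreasing
  have hQ0pos : ∀ t ∈ Set.Ici (0:ℝ), 0 < Q0 t := by
    apply my_pos (a := fun s => -(f0 (Q2 s) (Q3 s))) (d := fun s => -(f0 (Q2 s) (Q3 s)) * Q0 s)
      (fun t ht => (hf0c t ht).neg) hQ0' (fun t ht => le_refl _) hQ0i
  have hQ0le : ∀ t ∈ Set.Ici (0:ℝ), Q0 t ≤ Q0 0 := by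
    have hanti : AntitoneOn Q0 (Set.Ici 0) := by
      apply antitoneOn_of_deriv_nonpos (convex_Ici 0)
        (fun t ht => (hQ0c t ht).continuousWithinAt)
      · intro t ht
        rw [interior_Ici] at ht
        exact (hQ0' t (Set.mem_Ici.2 (Set.mem_Ioi.1 ht).le)).differentiableAt.differentiableWithinAt
      · intro t ht
        rw [interior_Ici] at ht
        rw [(hQ0' t (Set.mem_Ici.2 (Set.mem_Ioi.1 ht).le)).deriv]
        nlinarith [hQ0pos t (Set.mem_Ici.2 (Set.mem_Ioi.1 ht).le), (hf0bd (Q2 t) (Q3 t)).1]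
    exact fun t ht => hanti Set.self_mem_Ici ht ht
  -- Q1 nonneg, positive for t > 0, bounded
  have hf0Q0pos : ∀ t ∈ Set.Ici (0:ℝ), 0 < f0 (Q2 t) (Q3 t) * Q0 t := fun t ht =>
    mul_pos (lt_of_lt_of_le hm0 (hf0bd _ _).1) (hQ0pos t ht)
  have hQ1nn : ∀ t ∈ Set.Ici (0:ℝ), 0 ≤ Q1 t := by
    apply my_nonneg (a := fun s => -f1 (A1 s))
      (d := fun s => f0 (Q2 s) (Q3 s) * Q0 s - f1 (A1 s) * Q1 s)
      (fun t ht => (hf1c t ht).neg) hQ1'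
      (fun t ht => by
        have h := hf0Q0pos t ht
        show -f1 (A1 t) * Q1 t ≤ f0 (Q2 t) (Q3 t) * Q0 t - f1 (A1 t) * Q1 t
        linarith) (le_of_eq hQ1i.symm)
  have hQ1pos : ∀ t ∈ Set.Ioi (0:ℝ), 0 < Q1 t := by
    apply my_pos' (a := fun s => -f1 (A1 s))
      (d := fun s => f0 (Q2 s) (Q3 s) * Q0 s - f1 (A1 s) * Q1 s)
      (fun t ht => (hf1c t ht).neg) hQ1'
      (fun t ht => by
        have h := hf0Q0pos t ht
        show -f1 (A1 t) * Q1 t ≤ f0 (Q2 t) (Q3 t) * Q0 t - f1 (A1 t) * Q1 t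
        linarith)
      (fun t ht => by
        have h := hf0Q0pos t (Set.mem_Ici.2 (Set.mem_Ioi.1 ht).le)
        show -f1 (A1 t) * Q1 t < f0 (Q2 t) (Q3 t) * Q0 t - f1 (A1 t) * Q1 t
        linarith)
      (le_of_eq hQ1i.symm)
  have hM0pos : 0 < M0 := lt_of_lt_of_le hm0 ((hf0bd 0 0).1.trans (hf0bd 0 0).2)
  have hM1pos : 0 < M1 := lt_of_lt_of_le hm1 ((hf1bd 0).1.trans (hf1bd 0).2)
  set C1 := M0 * Q0 0 / m1 with hC1def
  clear_value C1
  have hC1pos : 0 < C1 := by rw [hC1def]; exact div_pos (mul_pos hM0pos hQ0i) hm1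
  have hm1C1 : m1 * C1 = M0 * Q0 0 := by
    rw [hC1def]
    field_simp
  have hQ1le : ∀ t ∈ Set.Ici (0:ℝ), Q1 t ≤ C1 := by
    have h := my_nonneg (a := fun _ => -m1) (x := fun s => C1 - Q1 s)
      (d := fun s => -(f0 (Q2 s) (Q3 s) * Q0 s - f1 (A1 s) * Q1 s))
      (fun t ht => continuousAt_const)
      (fun t ht => by
        have := (hasDerivAt_const t C1).sub (hQ1' t ht)
        exact this.congr_deriv (by ring))
      (fun t ht => by
        have h1 := (hf0bd (Q2 t) (Q3 t)).2
        have h2 := hQ0le t ht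
        have h4 := (hf1bd (A1 t)).1
        have h5 := hQ1nn t ht
        have h6 : 0 < f0 (Q2 t) (Q3 t) := lt_of_lt_of_le hm0 (hf0bd (Q2 t) (Q3 t)).1
        show -m1 * (C1 - Q1 t) ≤ -(f0 (Q2 t) (Q3 t) * Q0 t - f1 (A1 t) * Q1 t)
        nlinarith [mul_nonneg (sub_nonneg.2 h1) hQ0i.le,
          mul_nonneg (sub_nonneg.2 h2) h6.le,
          mul_nonneg (sub_nonneg.2 h4) h5])
      (by show (0:ℝ) ≤ C1 - Q1 0; rw [hQ1i, sub_zero]; exact hC1pos.le)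
    intro t ht
    have h2 := h t ht
    linarith
  -- the common factor G
  set G : ℝ → ℝ := fun s => 1 - (Q2 s + Q3 s) / τC + A1 s / τA1C + A2 s / τA2C with hG
  clear_value G
  have hGc : ∀ t ∈ Set.Ici (0:ℝ), ContinuousAt G t := by
    intro t ht
    rw [hG]
    exact ((continuousAt_const.sub (((hQ2c t ht).add (hQ3c t ht)).div_const τC)).add
      ((hA1c t ht).div_const τA1C)).add ((hA2c t ht).div_const τA2C)
  have hQ2deriv : ∀ t ∈ Set.Ici (0:ℝ), HasDerivAt Q2
      (γ2 * Q2 t * G t + f1 (A1 t) * Q1 t - f2 (A1 t) (A2 t) * Q2 t) t := by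
    intro t ht
    have := hQ2' t ht
    rw [hG]
    exact this
  have hQ3deriv : ∀ t ∈ Set.Ici (0:ℝ), HasDerivAt Q3
      (γ3 * Q3 t * G t + f2 (A1 t) (A2 t) * Q2 t) t := by
    intro t ht
    have := hQ3' t ht
    rw [hG]
    exact this
  -- Q2 nonneg / positive
  have hQ2nn : ∀ t ∈ Set.Ici (0:ℝ), 0 ≤ Q2 t := by
    apply my_nonneg (a := fun s => γ2 * G s - f2 (A1 s) (A2 s))
      (d := fun s => γ2 * Q2 s * G s + f1 (A1 s) * Q1 s - f2 (A1 s) (A2 s) * Q2 s)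
      (fun t ht => (continuousAt_const.mul (hGc t ht)).sub (hf2c t ht))
      hQ2deriv
      (fun t ht => by
        have h := mul_nonneg (le_of_lt (lt_of_lt_of_le hm1 (hf1bd (A1 t)).1)) (hQ1nn t ht)
        show (γ2 * G t - f2 (A1 t) (A2 t)) * Q2 t
          ≤ γ2 * Q2 t * G t + f1 (A1 t) * Q1 t - f2 (A1 t) (A2 t) * Q2 t
        nlinarith)
      (le_of_eq hQ2i.symm)
  have hQ2pos : ∀ t ∈ Set.Ioi (0:ℝ), 0 < Q2 t := by
    apply my_pos' (a := fun s => γ2 * G s - f2 (A1 s) (A2 s))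
      (d := fun s => γ2 * Q2 s * G s + f1 (A1 s) * Q1 s - f2 (A1 s) (A2 s) * Q2 s)
      (fun t ht => (continuousAt_const.mul (hGc t ht)).sub (hf2c t ht))
      hQ2deriv
      (fun t ht => by
        have h := mul_nonneg (le_of_lt (lt_of_lt_of_le hm1 (hf1bd (A1 t)).1)) (hQ1nn t ht)
        show (γ2 * G t - f2 (A1 t) (A2 t)) * Q2 t
          ≤ γ2 * Q2 t * G t + f1 (A1 t) * Q1 t - f2 (A1 t) (A2 t) * Q2 t
        nlinarith)
      (fun t ht => by
        have h := mul_pos (lt_of_lt_of_le hm1 (hf1bd (A1 t)).1) (hQ1pos t ht)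
        show (γ2 * G t - f2 (A1 t) (A2 t)) * Q2 t
          < γ2 * Q2 t * G t + f1 (A1 t) * Q1 t - f2 (A1 t) (A2 t) * Q2 t
        nlinarith)
      (le_of_eq hQ2i.symm)
  have hQ3nn : ∀ t ∈ Set.Ici (0:ℝ), 0 ≤ Q3 t := by
    apply my_nonneg (a := fun s => γ3 * G s)
      (d := fun s => γ3 * Q3 s * G s + f2 (A1 s) (A2 s) * Q2 s)
      (fun t ht => continuousAt_const.mul (hGc t ht))
      hQ3deriv
      (fun t ht => by
        have h := mul_nonneg (le_of_lt (lt_of_lt_of_le hm2 (hf2bd (A1 t) (A2 t)).1)) (hQ2nn t ht)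
        show γ3 * G t * Q3 t ≤ γ3 * Q3 t * G t + f2 (A1 t) (A2 t) * Q2 t
        nlinarith)
      (le_of_eq hQ3i.symm)
  -- A1 stays in (-τA1, τA1)
  have hτA1ne : τA1 ≠ 0 := ne_of_gt hτA1
  have hpc : ∀ t ∈ Set.Ici (0:ℝ), ContinuousAt (fun s => α1 * Q1 s + α2 * Q2 s - α3 * Q3 s) t :=
    fun t ht => ((continuousAt_const.mul (hQ1c t ht)).add
      (continuousAt_const.mul (hQ2c t ht))).sub (continuousAt_const.mul (hQ3c t ht))
  have hA1lt : ∀ t ∈ Set.Ici (0:ℝ), A1 t < τA1 := by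
    have h := my_pos (x := fun s => τA1 - A1 s)
      (a := fun s => -((α1 * Q1 s + α2 * Q2 s - α3 * Q3 s) * (1 + A1 s / τA1)) / τA1)
      (d := fun s => -((α1 * Q1 s + α2 * Q2 s - α3 * Q3 s) * (1 + A1 s / τA1) * (1 - A1 s / τA1)))
      (fun t ht => (((hpc t ht).mul
        (continuousAt_const.add ((hA1c t ht).div_const τA1))).neg).div_const τA1)
      (fun t ht => by
        have := (hasDerivAt_const t τA1).sub (hA1' t ht)
        exact this.congr_deriv (by ring))
      (fun t ht => by
        apply le_of_eq
        show -((α1 * Q1 t + α2 * Q2 t - α3 * Q3 t) * (1 + A1 t / τA1)) / τA1 * (τA1 - A1 t)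
          = -((α1 * Q1 t + α2 * Q2 t - α3 * Q3 t) * (1 + A1 t / τA1) * (1 - A1 t / τA1))
        field_simp
        try ring)
      (by show (0:ℝ) < τA1 - A1 0; linarith [hA1i.2])
    intro t ht
    have h2 := h t ht
    linarith
  have hA1gt : ∀ t ∈ Set.Ici (0:ℝ), -τA1 < A1 t := by
    have h := my_pos (x := fun s => τA1 + A1 s)
      (a := fun s => (α1 * Q1 s + α2 * Q2 s - α3 * Q3 s) * (1 - A1 s / τA1) / τA1)
      (d := fun s => (α1 * Q1 s + α2 * Q2 s - α3 * Q3 s) * (1 + A1 s / τA1) * (1 - A1 s / τA1))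
      (fun t ht => ((hpc t ht).mul
        (continuousAt_const.sub ((hA1c t ht).div_const τA1))).div_const τA1)
      (fun t ht => by
        have := (hasDerivAt_const t τA1).add (hA1' t ht)
        exact this.congr_deriv (by ring))
      (fun t ht => by
        apply le_of_eq
        show (α1 * Q1 t + α2 * Q2 t - α3 * Q3 t) * (1 - A1 t / τA1) / τA1 * (τA1 + A1 t)
          = (α1 * Q1 t + α2 * Q2 t - α3 * Q3 t) * (1 + A1 t / τA1) * (1 - A1 t / τA1)
        field_simp)
      (by show (0:ℝ) < τA1 + A1 0; linarith [hA1i.1])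
    intro t ht
    have h2 := h t ht
    linarith
  -- A2 stays in (0, τA2)
  have hτA2ne : τA2 ≠ 0 := ne_of_gt hτA2
  have hcc : ∀ t ∈ Set.Ici (0:ℝ), ContinuousAt (fun s => αb2 * Q2 s + αb3 * Q3 s) t :=
    fun t ht => (continuousAt_const.mul (hQ2c t ht)).add (continuousAt_const.mul (hQ3c t ht))
  have hA2pos : ∀ t ∈ Set.Ici (0:ℝ), 0 < A2 t := by
    apply my_pos (a := fun s => (αb2 * Q2 s + αb3 * Q3 s) * (1 - A2 s / τA2))
      (d := fun s => (αb2 * Q2 s + αb3 * Q3 s) * A2 s * (1 - A2 s / τA2))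
      (fun t ht => (hcc t ht).mul (continuousAt_const.sub ((hA2c t ht).div_const τA2)))
      hA2'
      (fun t ht => le_of_eq (by
        show (αb2 * Q2 t + αb3 * Q3 t) * (1 - A2 t / τA2) * A2 t
          = (αb2 * Q2 t + αb3 * Q3 t) * A2 t * (1 - A2 t / τA2)
        ring))
      hA2i.1
  have hA2lt : ∀ t ∈ Set.Ici (0:ℝ), A2 t < τA2 := by
    have h := my_pos (x := fun s => τA2 - A2 s)
      (a := fun s => -((αb2 * Q2 s + αb3 * Q3 s) * A2 s) / τA2)
      (d := fun s => -((αb2 * Q2 s + αb3 * Q3 s) * A2 s * (1 - A2 s / τA2)))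
      (fun t ht => (((hcc t ht).mul (hA2c t ht)).neg).div_const τA2)
      (fun t ht => by
        have := (hasDerivAt_const t τA2).sub (hA2' t ht)
        exact this.congr_deriv (by ring))
      (fun t ht => by
        apply le_of_eq
        show -((αb2 * Q2 t + αb3 * Q3 t) * A2 t) / τA2 * (τA2 - A2 t)
          = -((αb2 * Q2 t + αb3 * Q3 t) * A2 t * (1 - A2 t / τA2))
        field_simp
        try ring)
      (by show (0:ℝ) < τA2 - A2 0; linarith [hA2i.2])
    intro t ht
    have h2 := h t ht
    linarith
  -- derivative of y = Q2 + Q3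
  have hy' : ∀ t ∈ Set.Ici (0:ℝ), HasDerivAt (fun s => Q2 s + Q3 s)
      ((γ2 * Q2 t + γ3 * Q3 t) * G t + f1 (A1 t) * Q1 t) t := by
    intro t ht
    have h := (hQ2deriv t ht).add (hQ3deriv t ht)
    exact h.congr_deriv (by ring)
  -- constants
  have hγm : 0 < min γ2 γ3 := lt_min hγ2 hγ3
  set γm := min γ2 γ3 with hγmdef
  clear_value γm
  have hγm0 : γm ≠ 0 := ne_of_gt hγm
  set Γ : ℝ := 2 + τA2 / τA2C with hΓ
  clear_value Γ
  have hΓ2 : 2 ≤ Γ := by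
    have h := le_of_lt (div_pos hτA2 hτA2C)
    rw [hΓ]
    linarith
  set Cy := (Γ + 1) * τC + M1 * C1 / γm + 1 with hCydef
  clear_value Cy
  have hMCpos : 0 < M1 * C1 / γm := div_pos (mul_pos hM1pos hC1pos) hγm
  have hCyτC : τC < Cy := by
    rw [hCydef]
    nlinarith
  have hγmCy : γm * Cy = γm * ((Γ + 1) * τC + 1) + M1 * C1 := by
    rw [hCydef]
    field_simp
    ring
  -- bounds on G
  have hGub : ∀ t ∈ Set.Ici (0:ℝ), G t ≤ Γ - (Q2 t + Q3 t) / τC := by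
    intro t ht
    have h1 : A1 t / τA1C ≤ 1 := by
      rw [div_le_one hτA1C]
      linarith [hA1lt t ht, hττ]
    have h2 : A2 t / τA2C ≤ τA2 / τA2C := (div_le_div_iff_of_pos_right hτA2C).2 (hA2lt t ht).le
    rw [hG, hΓ]
    simp only []
    linarith
  set δ : ℝ := 1 - τA1 / τA1C with hδdef
  clear_value δ
  have hδpos : 0 < δ := by
    have h := (div_lt_one hτA1C).2 hττ
    rw [hδdef]
    linarith
  have hδle : δ ≤ 1 := by
    have h := div_pos hτA1 hτA1C
    rw [hδdef]
    linarith
  have hGlb : ∀ t ∈ Set.Ici (0:ℝ), δ - (Q2 t + Q3 t) / τC ≤ G t := by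
    intro t ht
    have h1 : -(τA1 / τA1C) ≤ A1 t / τA1C := by
      rw [← neg_div]
      exact (div_le_div_iff_of_pos_right hτA1C).2 (hA1gt t ht).le
    have h2 : 0 < A2 t / τA2C := div_pos (hA2pos t ht) hτA2C
    rw [hG, hδdef]
    simp only []
    linarith
  -- upper bound for y
  have hyub : ∀ t ∈ Set.Ici (0:ℝ), Q2 t + Q3 t ≤ Cy := by
    intro t3 ht3
    have h0y : Q2 0 + Q3 0 ≤ Cy := by rw [hQ2i, hQ3i]; linarith
    apply my_no_upcross (y := fun s => Q2 s + Q3 s)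
      (d := fun t => (γ2 * Q2 t + γ3 * Q3 t) * G t + f1 (A1 t) * Q1 t) ht3
      (fun t ht => hy' t ht.1) h0y
    intro t ht hCylt
    have htI : t ∈ Set.Ici (0:ℝ) := le_of_lt ht.1
    have hG1 : G t ≤ -1 := by
      have h1 := hGub t htI
      have h2 : Γ + 1 ≤ (Q2 t + Q3 t) / τC := by
        rw [le_div_iff₀ hτC]
        nlinarith
      linarith
    have hq2 := hQ2nn t htI
    have hq3 := hQ3nn t htI
    have hcoef : γm * (Q2 t + Q3 t) ≤ γ2 * Q2 t + γ3 * Q3 t := by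
      have h1 : γm ≤ γ2 := by rw [hγmdef]; exact min_le_left _ _
      have h2 : γm ≤ γ3 := by rw [hγmdef]; exact min_le_right _ _
      nlinarith
    have hcoefnn : 0 ≤ γ2 * Q2 t + γ3 * Q3 t :=
      add_nonneg (mul_nonneg hγ2.le hq2) (mul_nonneg hγ3.le hq3)
    have hmain : (γ2 * Q2 t + γ3 * Q3 t) * G t ≤ -(γm * (Q2 t + Q3 t)) := by
      have h3 := mul_le_mul_of_nonneg_left hG1 hcoefnn
      nlinarith
    have hf1Q1 : f1 (A1 t) * Q1 t ≤ M1 * C1 :=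
      mul_le_mul (hf1bd _).2 (hQ1le t htI) (hQ1nn t htI) hM1pos.le
    have hyCy : γm * Cy ≤ γm * (Q2 t + Q3 t) := mul_le_mul_of_nonneg_left hCylt.le hγm.le
    have hpos2 : 0 ≤ γm * ((Γ + 1) * τC + 1) := by
      have h9 : (0:ℝ) ≤ (Γ + 1) * τC := mul_nonneg (by linarith) hτC.le
      have h10 : (0:ℝ) ≤ (Γ + 1) * τC + 1 := by linarith
      exact mul_nonneg hγm.le h10
    show (γ2 * Q2 t + γ3 * Q3 t) * G t + f1 (A1 t) * Q1 t ≤ 0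
    linarith
  -- lower bound for y after time 1
  have hy1pos : 0 < Q2 1 + Q3 1 := by
    have h1 := hQ2pos 1 (by norm_num : (1:ℝ) ∈ Set.Ioi 0)
    have h2 := hQ3nn 1 (by norm_num : (1:ℝ) ∈ Set.Ici 0)
    linarith
  set ε := min (Q2 1 + Q3 1) (δ * τC) / 2 with hεdef
  clear_value ε
  have hδτC : 0 < δ * τC := mul_pos hδpos hτC
  have hεpos : 0 < ε := by
    rw [hεdef]
    have h := lt_min hy1pos hδτC
    linarith
  have hεy1 : ε ≤ Q2 1 + Q3 1 := by
    rw [hεdef]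
    have h := min_le_left (Q2 1 + Q3 1) (δ * τC)
    linarith
  have hεδ : ε < δ * τC := by
    rw [hεdef]
    have h := min_le_right (Q2 1 + Q3 1) (δ * τC)
    linarith
  have hylb : ∀ t3 ∈ Set.Ici (1:ℝ), ε ≤ Q2 t3 + Q3 t3 := by
    intro t3 ht3
    apply my_no_downcross (t0 := 1) (y := fun s => Q2 s + Q3 s)
      (d := fun t => (γ2 * Q2 t + γ3 * Q3 t) * G t + f1 (A1 t) * Q1 t) ht3
      (fun t ht => hy' t (le_trans zero_le_one ht.1)) hεy1
    intro t ht hlt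
    have htI : t ∈ Set.Ici (0:ℝ) := le_trans zero_le_one (le_of_lt ht.1)
    have hGpos : 0 ≤ G t := by
      have h1 := hGlb t htI
      have h2 : (Q2 t + Q3 t) / τC < δ := by
        rw [div_lt_iff₀ hτC]
        linarith
      linarith
    show 0 ≤ (γ2 * Q2 t + γ3 * Q3 t) * G t + f1 (A1 t) * Q1 t
    exact add_nonneg (mul_nonneg (add_nonneg (mul_nonneg hγ2.le (hQ2nn t htI))
        (mul_nonneg hγ3.le (hQ3nn t htI))) hGpos)
      (mul_nonneg (le_of_lt (lt_of_lt_of_le hm1 (hf1bd _).1)) (hQ1nn t htI))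
  -- conclusion
  refine ⟨1, one_pos, ε, Cy, hεpos, ?_, ?_⟩
  · have h1 : δ * τC ≤ τC := by nlinarith
    linarith
  · intro t ht
    exact ⟨hylb t (le_of_lt ht), hyub t (Set.mem_Ici.2 (by linarith))⟩
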